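/- Let S be a semigroup that is the disjoint union of free monogenic subsemigroups ⟨a⟩, ⟨b⟩, ⟨c⟩, and suppose ab = b², ba = a², ac = c², ca = a², bc = c^k, cb = a^l for positive integers k, l. Then k = l = 2. -/

import Mathlib

/-- `pw a n` is `a ^ n` for `n ≥ 1` (with junk value `a` at `n = 0`),
defined in any magma. -/
def pw {S : Type*} [Mul S] (a : S) : ℕ → S
  | 0 => a
  | 1 => a
  | n + 2 => pw a (n + 1) * a

/-- The monogenic subsemigroup `⟨a⟩ = {a^n : n ≥ 1}`. -/
def genSet {S : Type*} [Mul S] (a : S) : Set S := {x | ∃ n, 1 ≤ n ∧ pw a n = x}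

/-- `a` has infinite order: its positive powers are pairwise distinct,
i.e. `⟨a⟩` is free monogenic. -/
def InfOrder {S : Type*} [Mul S] (a : S) : Prop :=
  ∀ m n : ℕ, 1 ≤ m → 1 ≤ n → pw a m = pw a n → m = n

lemma pw_succ' {S : Type*} [Mul S] (a : S) (n : ℕ) : pw a (n + 2) = pw a (n + 1) * a := rfl

lemma pw_succ_left' {S : Type*} [Semigroup S] (a : S) :
    ∀ m : ℕ, pw a (m + 2) = a * pw a (m + 1) := by
  intro m
  induction m with
  | zero => rfl
  | succ p ih =>
    calc pw a (p + 3) = pw a (p + 2) * a := rfl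
      _ = (a * pw a (p + 1)) * a := by rw [ih]
      _ = a * (pw a (p + 1) * a) := mul_assoc _ _ _
      _ = a * pw a (p + 2) := rfl

lemma pw_succ_left {S : Type*} [Semigroup S] (a : S) :
    ∀ n, 1 ≤ n → pw a (n + 1) = a * pw a n := by
  intro n hn
  obtain ⟨m, rfl⟩ : ∃ m, n = m + 1 := ⟨n - 1, by omega⟩
  exact pw_succ_left' a m

/-- If `x * y = y * y` then `x * y^n = y^(n+1)`. -/
lemma key1 {S : Type*} [Semigroup S] (x y : S) (h : x * y = y * y) :
    ∀ n, 1 ≤ n → x * pw y n = pw y (n + 1) := by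
  intro n hn
  obtain ⟨m, rfl⟩ : ∃ m, n = m + 1 := ⟨n - 1, by omega⟩
  induction m with
  | zero => exact h
  | succ p ih =>
    calc x * pw y (p + 2) = x * (pw y (p + 1) * y) := rfl
      _ = (x * pw y (p + 1)) * y := (mul_assoc _ _ _).symm
      _ = pw y (p + 2) * y := by rw [ih (by omega)]
      _ = pw y (p + 3) := rfl

/-- If `x * y = y * y` then `x^n * y = y^(n+1)`. -/
lemma key2 {S : Type*} [Semigroup S] (x y : S) (h : x * y = y * y) :
    ∀ n, 1 ≤ n → pw x n * y = pw y (n + 1) := by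
  intro n hn
  obtain ⟨m, rfl⟩ : ∃ m, n = m + 1 := ⟨n - 1, by omega⟩
  induction m with
  | zero => exact h
  | succ p ih =>
    calc pw x (p + 2) * y = (x * pw x (p + 1)) * y := by rw [pw_succ_left' x p]
      _ = x * (pw x (p + 1) * y) := mul_assoc _ _ _
      _ = x * pw y (p + 2) := by rw [ih (by omega)]
      _ = pw y (p + 3) := key1 x y h (p + 2) (by omega)

theorem stmt_17 {S : Type*} [Semigroup S] (a b c : S)
    (ha : InfOrder a) (hb : InfOrder b) (hc : InfOrder c)
    (hab : genSet a ∩ genSet b = ∅) (hac : genSet a ∩ genSet c = ∅)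
    (hbc : genSet b ∩ genSet c = ∅)
    (hcover : genSet a ∪ genSet b ∪ genSet c = Set.univ)
    (k l : ℕ) (hk : 1 ≤ k) (hl : 1 ≤ l)
    (h1 : a * b = pw b 2) (h2 : b * a = pw a 2)
    (h3 : a * c = pw c 2) (h4 : c * a = pw a 2)
    (h5 : b * c = pw c k) (h6 : c * b = pw a l) :
    k = 2 ∧ l = 2 := by
  have h2' : b * a = a * a := h2
  have h4' : c * a = a * a := h4
  have h3' : a * c = c * c := h3
  -- c * a^n = a^(n+1)
  have hca : ∀ n, 1 ≤ n → c * pw a n = pw a (n + 1) := key1 c a h4'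
  -- b * a^n = a^(n+1)
  have hba : ∀ n, 1 ≤ n → b * pw a n = pw a (n + 1) := key1 b a h2'
  -- c^(m+1) * b = a^(l+m)
  have hcb : ∀ m, pw c (m + 1) * b = pw a (l + m) := by
    intro m
    induction m with
    | zero => simpa [pw] using h6
    | succ p ih =>
      calc pw c (p + 2) * b = (c * pw c (p + 1)) * b := by rw [pw_succ_left' c p]
        _ = c * (pw c (p + 1) * b) := mul_assoc _ _ _
        _ = c * pw a (l + p) := by rw [ih]
        _ = pw a (l + p + 1) := hca (l + p) (by omega)
        _ = pw a (l + (p + 1)) := by ring_nf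
  -- First: b * (c * b) = (b * c) * b gives a^(l+1) = a^(l + (k-1))
  have e1 : pw a (l + 1) = pw a (l + (k - 1)) := by
    have : b * (c * b) = (b * c) * b := (mul_assoc b c b).symm
    rw [h6, h5, hba l hl] at this
    have hk1 : k = (k - 1) + 1 := by omega
    rw [hk1, hcb (k - 1)] at this
    exact this
  have hkeq : l + 1 = l + (k - 1) := ha _ _ (by omega) (by omega) e1
  have hk2 : k = 2 := by omega
  -- Second: c * (b * c) = (c * b) * c gives c^(k+1) = c^(l+1)
  have hcc : ∀ n, 1 ≤ n → c * pw c n = pw c (n + 1) := key1 c c rfl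
  have hac' : ∀ n, 1 ≤ n → pw a n * c = pw c (n + 1) := key2 a c h3'
  have e2 : pw c (k + 1) = pw c (l + 1) := by
    have : c * (b * c) = (c * b) * c := (mul_assoc c b c).symm
    rw [h5, h6, hcc k hk, hac' l hl] at this
    exact this
  have hleq : k + 1 = l + 1 := hc _ _ (by omega) (by omega) e2
  exact ⟨hk2, by omega⟩
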